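/- arXiv:2204.06474 — 2 statements merged into one kernel-verified Lean document; each statement's English description precedes it below -/
import Mathlib

section
/- Let $T > 0$, $\omega > 0$, and let $\varphi : [0,T] \to \mathbb{R}$ be twice continuously differentiable with $\varphi \ge 0$ and $\varphi''(t) \ge \omega^2 \varphi(t)$ for all $t \in (0,T)$. Then for every $t \in [0,T]$, $\varphi(t) \le \varphi(0) e^{-\omega t} + \varphi(T) e^{-\omega (T-t)}$. -/
theorem turnpike_ode_comparison (T ω : ℝ) (hT : 0 < T) (hω : 0 < ω)
    (φ : ℝ → ℝ) (hφ : ContDiff ℝ 2 φ)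
    (hnonneg : ∀ t ∈ Set.Icc (0:ℝ) T, 0 ≤ φ t)
    (hineq : ∀ t ∈ Set.Ioo (0:ℝ) T, ω ^ 2 * φ t ≤ deriv (deriv φ) t) :
    ∀ t ∈ Set.Icc (0:ℝ) T,
      φ t ≤ φ 0 * Real.exp (-ω * t) + φ T * Real.exp (-ω * (T - t)) := by
  set ψ : ℝ → ℝ := fun t => φ 0 * Real.exp (-ω * t) + φ T * Real.exp (-ω * (T - t)) with hψdef
  set ψ' : ℝ → ℝ := fun t =>
    φ 0 * (-ω * Real.exp (-ω * t)) + φ T * (ω * Real.exp (-ω * (T - t))) with hψ'def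
  have hψd : ∀ t, HasDerivAt ψ (ψ' t) t := by
    intro t
    have h1 := ((hasDerivAt_id t).const_mul (-ω)).exp
    have h2 := (((hasDerivAt_id t).const_sub T).const_mul (-ω)).exp
    have := (h1.const_mul (φ 0)).add (h2.const_mul (φ T))
    simp only [id] at this
    convert this using 1
    · rfl
    · rfl
    · rfl
    · show φ 0 * (-ω * Real.exp (-ω * t)) + φ T * (ω * Real.exp (-ω * (T - t))) = _; ring
  have hψ'd : ∀ t, HasDerivAt ψ' (ω ^ 2 * ψ t) t := by
    intro t
    have h1 := ((hasDerivAt_id t).const_mul (-ω)).exp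
    have h2 := (((hasDerivAt_id t).const_sub T).const_mul (-ω)).exp
    have := ((h1.const_mul (-ω)).const_mul (φ 0)).add ((h2.const_mul ω).const_mul (φ T))
    simp only [id] at this
    convert this using 1
    · rfl
    · rfl
    · rfl
    · show ω ^ 2 * (φ 0 * Real.exp (-ω * t) + φ T * Real.exp (-ω * (T - t))) = _; ring
  have hφ1 : ContDiff ℝ 1 (deriv φ) :=
    (contDiff_succ_iff_deriv.mp (show ContDiff ℝ (1 + 1) φ from hφ)).2.2
  have hφd : Differentiable ℝ φ := hφ.differentiable two_ne_zero
  have hφd2 : Differentiable ℝ (deriv φ) := hφ1.differentiable one_ne_zero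
  set h : ℝ → ℝ := fun t => φ t - ψ t with hhdef
  have hhd : ∀ t, HasDerivAt h (deriv φ t - ψ' t) t := fun t =>
    (hφd t).hasDerivAt.sub (hψd t)
  have hderivh : deriv h = fun t => deriv φ t - ψ' t := funext fun t => (hhd t).deriv
  have hhd2 : ∀ t, HasDerivAt (deriv h) (deriv (deriv φ) t - ω ^ 2 * ψ t) t := by
    intro t
    rw [hderivh]
    exact (hφd2 t).hasDerivAt.sub (hψ'd t)
  -- it suffices to show h ≤ 0 on Icc
  suffices H : ∀ t ∈ Set.Icc (0:ℝ) T, h t ≤ 0 by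
    intro t ht
    have := H t ht
    simp only [hhdef, hψdef] at this
    linarith
  -- max of h on Icc
  have hψcont : Continuous ψ := by
    simp only [hψdef]; fun_prop
  have hhcont : Continuous h := hφd.continuous.sub hψcont
  obtain ⟨c, hc, hmax⟩ := (isCompact_Icc).exists_isMaxOn (Set.nonempty_Icc.mpr hT.le)
    hhcont.continuousOn
  intro t ht
  have hle := hmax ht
  by_contra hpos
  push_neg at hpos
  have hhc : 0 < h c := lt_of_lt_of_le hpos hle
  -- endpoints
  have hh0 : h 0 ≤ 0 := by
    have := hnonneg T (Set.mem_Icc.mpr ⟨hT.le, le_rfl⟩)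
    have e0 : h 0 = -(φ T * Real.exp (-ω * (T - 0))) := by
      simp [hhdef, hψdef]
    rw [e0]
    nlinarith [Real.exp_pos (-ω * (T - 0))]
  have hhT : h T ≤ 0 := by
    have := hnonneg 0 (Set.mem_Icc.mpr ⟨le_rfl, hT.le⟩)
    have eT : h T = -(φ 0 * Real.exp (-ω * T)) := by
      simp [hhdef, hψdef]
    rw [eT]
    nlinarith [Real.exp_pos (-ω * T)]
  have hc0 : c ≠ 0 := fun e => by rw [e] at hhc; linarith
  have hcT : c ≠ T := fun e => by rw [e] at hhc; linarith
  have hcIoo : c ∈ Set.Ioo (0:ℝ) T :=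
    ⟨lt_of_le_of_ne hc.1 (Ne.symm hc0), lt_of_le_of_ne hc.2 hcT⟩
  -- h'' c > 0
  have hψc : φ c - ψ c = h c := rfl
  have hdd : deriv (deriv h) c = deriv (deriv φ) c - ω ^ 2 * ψ c := (hhd2 c).deriv
  have hddpos : 0 < deriv (deriv h) c := by
    rw [hdd]
    have := hineq c hcIoo
    have : ω ^ 2 * h c ≤ deriv (deriv φ) c - ω ^ 2 * ψ c := by
      simp only [hhdef]; nlinarith
    nlinarith [sq_nonneg ω, pow_pos hω 2]
  -- h' c = 0
  have hlocmax : IsLocalMax h c :=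
    hmax.isLocalMax (Icc_mem_nhds hcIoo.1 hcIoo.2)
  have hderiv0 : deriv h c = 0 := hlocmax.deriv_eq_zero
  -- deriv h is eventually positive to the right of c
  have hdc : HasDerivAt (deriv h) (deriv (deriv h) c) c := by
    rw [hdd]; exact hhd2 c
  have hslope : Filter.Tendsto (slope (deriv h) c) (nhdsWithin c {c}ᶜ)
      (nhds (deriv (deriv h) c)) := hasDerivAt_iff_tendsto_slope.mp hdc
  have hev : ∀ᶠ x in nhdsWithin c (Set.Ioi c), 0 < slope (deriv h) c x :=
    (hslope.mono_left (nhdsWithin_mono c fun x hx => ne_of_gt hx)).eventually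
      (eventually_gt_nhds hddpos)
  have hev2 : ∀ᶠ x in nhdsWithin c (Set.Ioi c), 0 < deriv h x := by
    filter_upwards [hev, self_mem_nhdsWithin] with x hx hx'
    have hxc : 0 < x - c := sub_pos.mpr hx'
    have hsl : 0 < (deriv h x - deriv h c) / (x - c) := by
      rwa [slope_def_field] at hx
    rw [hderiv0, sub_zero] at hsl
    rcases div_pos_iff.mp hsl with ⟨h1, _⟩ | ⟨_, h2⟩
    · exact h1
    · linarith
  obtain ⟨u, hu, hsub⟩ := mem_nhdsGT_iff_exists_Ioo_subset.mp hev2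
  set d : ℝ := min u T with hddef
  have hcd : c < d := lt_min hu hcIoo.2
  set e : ℝ := (c + d) / 2 with hedef
  have hce : c < e := by rw [hedef]; linarith
  have hed : e < d := by rw [hedef]; linarith
  have hmono : StrictMonoOn h (Set.Icc c e) := by
    apply strictMonoOn_of_deriv_pos (convex_Icc c e) hhcont.continuousOn
    intro x hx
    rw [interior_Icc] at hx
    exact hsub ⟨hx.1, lt_of_lt_of_le (hx.2.trans hed) (min_le_left u T)⟩
  have heIcc : e ∈ Set.Icc (0:ℝ) T :=
    ⟨le_of_lt (lt_of_le_of_lt hc.1 hce), le_of_lt (lt_of_lt_of_le hed (min_le_right u T))⟩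
  have := hmono (Set.left_mem_Icc.mpr hce.le) ⟨hce.le, le_rfl⟩ hce
  have h2 := hmax heIcc
  simp only [Set.mem_setOf_eq] at h2
  exact absurd h2 (not_le.mpr this)
end

section
/- Let $T > 0$, $\omega > 0$, and let $\varphi : [0,T] \to \mathbb{R}$ be twice continuously differentiable with $\varphi \ge 0$, $\varphi''(t) \ge \omega^2 \varphi(t)$ for all $t \in (0,T)$, and Robin boundary condition $\varphi'(T) \le -\omega \varphi(T)$. Then for every $t \in [0,T]$, $\varphi(t) \le \varphi(0) e^{-\omega t}$. -/
theorem turnpike_ode_comparison_robin (T ω : ℝ) (hT : 0 < T) (hω : 0 < ω)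
    (φ : ℝ → ℝ) (hφ : ContDiff ℝ 2 φ)
    (hnonneg : ∀ t ∈ Set.Icc (0:ℝ) T, 0 ≤ φ t)
    (hineq : ∀ t ∈ Set.Ioo (0:ℝ) T, ω ^ 2 * φ t ≤ deriv (deriv φ) t)
    (hrobin : deriv φ T ≤ -ω * φ T) :
    ∀ t ∈ Set.Icc (0:ℝ) T, φ t ≤ φ 0 * Real.exp (-ω * t) := by
  have h2 : ContDiff ℝ ((1:ℕ∞) + 1) φ := by norm_num; exact hφ
  have hd1 : Differentiable ℝ φ := hφ.differentiable (by norm_num)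
  have hφ' : ContDiff ℝ 1 (deriv φ) := (contDiff_succ_iff_deriv.mp h2).2.2
  have hd2 : Differentiable ℝ (deriv φ) := hφ'.differentiable (by norm_num)
  set ψ : ℝ → ℝ := fun t => deriv φ t + ω * φ t with hψ
  have hdψ : Differentiable ℝ ψ := hd2.add (differentiable_const ω |>.mul hd1)
  set f : ℝ → ℝ := fun t => Real.exp (-ω * t) * ψ t with hf
  have hdf : Differentiable ℝ f := by
    apply Differentiable.mul _ hdψ
    exact (differentiable_const _ |>.mul differentiable_id).exp
  have hderivf : ∀ t, deriv f t = Real.exp (-ω * t) * (deriv (deriv φ) t - ω ^ 2 * φ t) := by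
    intro t
    have he : deriv (fun t => Real.exp (-ω * t)) t = -ω * Real.exp (-ω * t) := by
      rw [show (fun t => Real.exp (-ω * t)) = Real.exp ∘ (fun t => -ω * t) by rfl]
      rw [deriv_comp _ Real.differentiable_exp.differentiableAt (by fun_prop)]
      have hid : deriv (fun x : ℝ => -ω * x) t = -ω := by
        simpa using ((hasDerivAt_id t).const_mul (-ω)).deriv
      have hid2 : deriv (fun x : ℝ => ω * x) t = ω := by
        simpa using ((hasDerivAt_id t).const_mul ω).deriv
      simp [hid, hid2]; ring
    have hψd : deriv ψ t = deriv (deriv φ) t + ω * deriv φ t := by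
      rw [hψ, deriv_fun_add (hd2 t) (by fun_prop), deriv_const_mul _ (hd1 t)]
    rw [hf, deriv_fun_mul (by fun_prop) (hdψ t), he, hψd]
    ring
  -- f is monotone on [0,T]
  have hmono : MonotoneOn f (Set.Icc 0 T) := by
    apply monotoneOn_of_deriv_nonneg (convex_Icc 0 T) hdf.continuous.continuousOn
      (hdf.differentiableOn.mono interior_subset)
    intro t ht
    rw [interior_Icc] at ht
    rw [hderivf]
    exact mul_nonneg (Real.exp_pos _).le (by linarith [hineq t ht])
  -- ψ ≤ 0 on [0,T]
  have hψle : ∀ t ∈ Set.Icc (0:ℝ) T, ψ t ≤ 0 := by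
    intro t ht
    have h1 : f t ≤ f T := hmono ht (Set.right_mem_Icc.mpr hT.le) ht.2
    have h2 : f T ≤ 0 := by
      have : ψ T ≤ 0 := by simp only [hψ]; linarith
      exact mul_nonpos_of_nonneg_of_nonpos (Real.exp_pos _).le this
    rcases mul_nonpos_iff.mp (h1.trans h2) with ⟨_, h⟩ | ⟨h, _⟩
    · exact h
    · linarith [Real.exp_pos (-ω * t)]
  -- g = exp(ωt) φ is antitone
  set g : ℝ → ℝ := fun t => Real.exp (ω * t) * φ t with hg
  have hdg : Differentiable ℝ g := by
    apply Differentiable.mul _ hd1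
    exact (differentiable_const _ |>.mul differentiable_id).exp
  have hderivg : ∀ t, deriv g t = Real.exp (ω * t) * ψ t := by
    intro t
    have he : deriv (fun t => Real.exp (ω * t)) t = ω * Real.exp (ω * t) := by
      rw [show (fun t => Real.exp (ω * t)) = Real.exp ∘ (fun t => ω * t) by rfl]
      rw [deriv_comp _ Real.differentiable_exp.differentiableAt (by fun_prop)]
      have hid : deriv (fun x : ℝ => ω * x) t = ω := by
        simpa using ((hasDerivAt_id t).const_mul ω).deriv
      simp [hid]; ring
    rw [hg, deriv_fun_mul (by fun_prop) (hd1 t), he, hψ]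
    ring
  have hanti : AntitoneOn g (Set.Icc 0 T) := by
    apply antitoneOn_of_deriv_nonpos (convex_Icc 0 T) hdg.continuous.continuousOn
      (hdg.differentiableOn.mono interior_subset)
    intro t ht
    rw [interior_Icc] at ht
    rw [hderivg]
    exact mul_nonpos_of_nonneg_of_nonpos (Real.exp_pos _).le
      (hψle t ⟨ht.1.le, ht.2.le⟩)
  intro t ht
  have h0 : g t ≤ g 0 := hanti (Set.left_mem_Icc.mpr hT.le) ht ht.1
  simp only [hg, mul_zero, Real.exp_zero, one_mul] at h0
  have hpos : (0:ℝ) < Real.exp (ω * t) := Real.exp_pos _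
  rw [show -ω * t = -(ω * t) by ring, Real.exp_neg, ← div_eq_mul_inv, le_div_iff₀ hpos]
  nlinarith [h0]
end
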